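/- Suppose S = ⟨C, ≺, g⟩ is a pseudo-distance on 𝒱 such that V |_S W = V | W for all V, W ⊆ 𝒱, where | is the modified Hamster-Wheel operator. Then for every i ∈ [1, m−1], g(v_i, w_i) = g(v_{i+1}, w_{i+1}). -/
import Mathlib


/-- `lt` is a strict total order on `C`. -/
def StrictTotalOrder' {C : Type*} (lt : C → C → Prop) : Prop :=
  (∀ c, ¬ lt c c) ∧ (∀ a b c, lt a b → lt b c → lt a c) ∧
  (∀ a b, a ≠ b → lt a b ∨ lt b a)

/-- The operator induced by a pseudo-distance `⟨C, lt, d⟩`: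
`V |_D W = {w ∈ W : ∃ v ∈ V, ∀ v' ∈ V, ∀ w' ∈ W, d(v,w) ⪯ d(v',w')}`. -/
def inducedOp {𝒱 C : Type*} (lt : C → C → Prop) (d : 𝒱 → 𝒱 → C)
    (A B : Set 𝒱) : Set 𝒱 :=
  {w ∈ B | ∃ v ∈ A, ∀ v' ∈ A, ∀ w' ∈ B, lt (d v w) (d v' w') ∨ d v w = d v' w'}

/-- The elements `v 1, …, v m, w 1, …, w m` are `2m` pairwise distinct elements. -/
def hwDistinct {𝒱 : Type*} (m : ℕ) (v w : ℕ → 𝒱) : Prop :=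
  (∀ i ∈ Set.Icc 1 m, ∀ j ∈ Set.Icc 1 m, v i ≠ w j) ∧
  (∀ i ∈ Set.Icc 1 m, ∀ j ∈ Set.Icc 1 m, v i = v j → i = j) ∧
  (∀ i ∈ Set.Icc 1 m, ∀ j ∈ Set.Icc 1 m, w i = w j → i = j)

/-- `X = {v 1, …, v m, w 1, …, w m}`. -/
def hwX {𝒱 : Type*} (m : ℕ) (v w : ℕ → 𝒱) : Set 𝒱 :=
  {x | ∃ i ∈ Set.Icc 1 m, x = v i ∨ x = w i}

open Classical in
/-- The Hamster-Wheel pseudo-distance `d : 𝒱 × 𝒱 → ℝ`. -/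
noncomputable def hwD {𝒱 : Type*} (m : ℕ) (v w : ℕ → 𝒱) (a b : 𝒱) : ℝ :=
  if a = b then 0
  else if ¬ (({a, b} : Set 𝒱) ⊆ hwX m v w) then 1
  else if (∃ i ∈ Set.Icc 1 m, ∃ j ∈ Set.Icc 1 m, a = v i ∧ b = v j) ∨
      (∃ i ∈ Set.Icc 1 m, ∃ j ∈ Set.Icc 1 m, a = w i ∧ b = w j) then 1.1
  else if ∃ i ∈ Set.Icc 1 m, ({a, b} : Set 𝒱) = {v i, w i} then 1.4
  else if ∃ i ∈ Set.Icc 1 m, ∃ j ∈ Set.Icc 1 m,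
      ({a, b} : Set 𝒱) = {v i, w j} ∧ ((i : ℤ) - j).natAbs ∈ ({1, m - 1} : Set ℕ) then 2
  else 1.2

open Classical in
/-- The modified Hamster-Wheel operator `|` on `𝒫(𝒱)`. -/
noncomputable def hwOp {𝒱 : Type*} (m : ℕ) (v w : ℕ → 𝒱) (A B : Set 𝒱) : Set 𝒱 :=
  if A = ({v m, v 1} : Set 𝒱) ∧ B = ({w m, w 1} : Set 𝒱) then {w m}
  else if A = ({w m, w 1} : Set 𝒱) ∧ B = ({v m, v 1} : Set 𝒱) then {v m}
  else inducedOp (· < ·) (hwD m v w) A B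

lemma hwD_vw {𝒱 : Type*} {m : ℕ} {v w : ℕ → 𝒱} (hdist : hwDistinct m v w)
    {i j : ℕ} (hi : i ∈ Set.Icc 1 m) (hj : j ∈ Set.Icc 1 m) :
    hwD m v w (v i) (w j) =
      if i = j then 1.4
      else if ((i : ℤ) - j).natAbs ∈ ({1, m - 1} : Set ℕ) then 2 else 1.2 := by
  obtain ⟨hvw, hv, hw⟩ := hdist
  have hne : v i ≠ w j := hvw i hi j hj
  have hsub : ({v i, w j} : Set 𝒱) ⊆ hwX m v w := by
    intro x hx
    simp only [Set.mem_insert_iff, Set.mem_singleton_iff] at hx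
    rcases hx with rfl | rfl
    · exact ⟨i, hi, Or.inl rfl⟩
    · exact ⟨j, hj, Or.inr rfl⟩
  have hfam : ¬ ((∃ k ∈ Set.Icc 1 m, ∃ l ∈ Set.Icc 1 m, v i = v k ∧ w j = v l) ∨
      (∃ k ∈ Set.Icc 1 m, ∃ l ∈ Set.Icc 1 m, v i = w k ∧ w j = w l)) := by
    rintro (⟨k, hk, l, hl, -, h2⟩ | ⟨k, hk, -, -, h1, -⟩)
    · exact hvw l hl j hj h2.symm
    · exact hvw i hi k hk h1
  have hpair : ∀ k l : ℕ, k ∈ Set.Icc 1 m → l ∈ Set.Icc 1 m →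
      ({v i, w j} : Set 𝒱) = {v k, w l} → i = k ∧ j = l := by
    intro k l hk hl h
    have h1 : v i ∈ ({v k, w l} : Set 𝒱) := by rw [← h]; exact Set.mem_insert _ _
    have h2 : w j ∈ ({v k, w l} : Set 𝒱) := by
      rw [← h]; exact Set.mem_insert_iff.mpr (Or.inr rfl)
    simp only [Set.mem_insert_iff, Set.mem_singleton_iff] at h1 h2
    rcases h1 with h1 | h1
    · rcases h2 with h2 | h2
      · exact absurd h2.symm (hvw k hk j hj)
      · exact ⟨hv i hi k hk h1, hw j hj l hl h2⟩
    · exact absurd h1 (hvw i hi l hl)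
  unfold hwD
  rw [if_neg hne, if_neg (not_not_intro hsub), if_neg hfam]
  by_cases hij : i = j
  · subst hij
    rw [if_pos ⟨i, hi, rfl⟩, if_pos rfl]
  · rw [if_neg (fun ⟨k, hk, h⟩ => hij ((hpair k k hk hk h).1.trans (hpair k k hk hk h).2.symm)),
      if_neg hij]
    by_cases hadj : ((i : ℤ) - j).natAbs ∈ ({1, m - 1} : Set ℕ)
    · rw [if_pos ⟨i, hi, j, hj, rfl, hadj⟩, if_pos hadj]
    · rw [if_neg ?_, if_neg hadj]
      rintro ⟨k, hk, l, hl, h, hmem⟩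
      obtain ⟨rfl, rfl⟩ := hpair k l hk hl h
      exact hadj hmem

/-- If a pseudo-distance `⟨C, lt, g⟩` induces the modified Hamster-Wheel operator, then
`g(v_i, w_i) = g(v_{i+1}, w_{i+1})` for every `i ∈ [1, m-1]`. -/
theorem stmt5 {𝒱 : Type*} (m : ℕ) (hm : 4 ≤ m) (v w : ℕ → 𝒱)
    (hdist : hwDistinct m v w)
    {C : Type*} (lt : C → C → Prop) (g : 𝒱 → 𝒱 → C)
    (hne : Nonempty C) (hsto : StrictTotalOrder' lt)
    (heq : ∀ A B : Set 𝒱, inducedOp lt g A B = hwOp m v w A B) :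
    ∀ i ∈ Set.Icc 1 (m - 1), g (v i) (w i) = g (v (i + 1)) (w (i + 1)) := by
  obtain ⟨hvw, hv, hw⟩ := hdist
  obtain ⟨hirr, htrans, htot⟩ := hsto
  intro i hi
  rw [Set.mem_Icc] at hi
  obtain ⟨hi1, hi2⟩ := hi
  have him : i ∈ Set.Icc 1 m := Set.mem_Icc.mpr ⟨hi1, by omega⟩
  have hsm : i + 1 ∈ Set.Icc 1 m := Set.mem_Icc.mpr ⟨by omega, by omega⟩
  have hm1 : (1 : ℕ) ∈ Set.Icc 1 m := Set.mem_Icc.mpr ⟨le_refl 1, by omega⟩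
  have hmm : m ∈ Set.Icc 1 m := Set.mem_Icc.mpr ⟨by omega, le_refl m⟩
  -- distance values
  have d11 : hwD m v w (v i) (w i) = 1.4 := by
    rw [hwD_vw ⟨hvw, hv, hw⟩ him him, if_pos rfl]
  have d22 : hwD m v w (v (i + 1)) (w (i + 1)) = 1.4 := by
    rw [hwD_vw ⟨hvw, hv, hw⟩ hsm hsm, if_pos rfl]
  have d12 : hwD m v w (v i) (w (i + 1)) = 2 := by
    rw [hwD_vw ⟨hvw, hv, hw⟩ him hsm, if_neg (by omega),
      if_pos (Set.mem_insert_iff.mpr (Or.inl (by push_cast; omega)))]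
  have d21 : hwD m v w (v (i + 1)) (w i) = 2 := by
    rw [hwD_vw ⟨hvw, hv, hw⟩ hsm him, if_neg (by omega),
      if_pos (Set.mem_insert_iff.mpr (Or.inl (by push_cast; omega)))]
  set B : Set 𝒱 := {w i, w (i + 1)} with hB
  have hwiB : w i ∈ B := Set.mem_insert _ _
  have hwi1B : w (i + 1) ∈ B := Set.mem_insert_iff.mpr (Or.inr rfl)
  -- exception refutations for singleton A's
  have excv : ∀ x : 𝒱, ({x} : Set 𝒱) ≠ ({v m, v 1} : Set 𝒱) := by
    intro x h
    have h1 : v m ∈ ({x} : Set 𝒱) := by rw [h]; exact Set.mem_insert _ _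
    have h2 : v 1 ∈ ({x} : Set 𝒱) := by rw [h]; exact Set.mem_insert_iff.mpr (Or.inr rfl)
    rw [Set.mem_singleton_iff] at h1 h2
    have : m = 1 := hv m hmm 1 hm1 (h1.trans h2.symm)
    omega
  have excw : ∀ x : ℕ, x ∈ Set.Icc 1 m → ({v x} : Set 𝒱) ≠ ({w m, w 1} : Set 𝒱) := by
    intro x hx h
    have h1 : w m ∈ ({v x} : Set 𝒱) := by rw [h]; exact Set.mem_insert _ _
    rw [Set.mem_singleton_iff] at h1
    exact hvw x hx m hmm h1.symm
  -- hwOp on singleton A equals inducedOp of hwD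
  have hop1 : ∀ x : ℕ, x ∈ Set.Icc 1 m →
      hwOp m v w {v x} B = inducedOp (· < ·) (hwD m v w) {v x} B := by
    intro x hx
    unfold hwOp
    rw [if_neg (fun h => excv (v x) h.1), if_neg (fun h => excw x hx h.1)]
  -- strict comparisons from singleton-A instances
  have L1 : lt (g (v i) (w i)) (g (v i) (w (i + 1))) := by
    have hnot : w (i + 1) ∉ inducedOp lt g {v i} B := by
      rw [heq, hop1 i him]
      rintro ⟨-, x, hx, hall⟩
      rw [Set.mem_singleton_iff] at hx
      subst hx
      have := hall (v i) rfl (w i) hwiB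
      rw [d11, d12] at this
      rcases this with h | h <;> norm_num at h
    have hK : ¬ (lt (g (v i) (w (i + 1))) (g (v i) (w i)) ∨
        g (v i) (w (i + 1)) = g (v i) (w i)) := by
      intro h
      apply hnot
      refine ⟨hwi1B, v i, rfl, ?_⟩
      rintro v' rfl w' hw'
      rcases hw' with rfl | hw'
      · exact h
      · rw [Set.mem_singleton_iff] at hw'
        subst hw'
        exact Or.inr rfl
    rcases htot (g (v i) (w i)) (g (v i) (w (i + 1)))
        (fun h => hK (Or.inr h.symm)) with h | h
    · exact h
    · exact absurd (Or.inl h) hK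
  have L2 : lt (g (v (i + 1)) (w (i + 1))) (g (v (i + 1)) (w i)) := by
    have hnot : w i ∉ inducedOp lt g {v (i + 1)} B := by
      rw [heq, hop1 (i + 1) hsm]
      rintro ⟨-, x, hx, hall⟩
      rw [Set.mem_singleton_iff] at hx
      subst hx
      have := hall (v (i + 1)) rfl (w (i + 1)) hwi1B
      rw [d22, d21] at this
      rcases this with h | h <;> norm_num at h
    have hK : ¬ (lt (g (v (i + 1)) (w i)) (g (v (i + 1)) (w (i + 1))) ∨
        g (v (i + 1)) (w i) = g (v (i + 1)) (w (i + 1))) := by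
      intro h
      apply hnot
      refine ⟨hwiB, v (i + 1), rfl, ?_⟩
      rintro v' rfl w' hw'
      rcases hw' with rfl | hw'
      · exact Or.inr rfl
      · rw [Set.mem_singleton_iff] at hw'
        subst hw'
        exact h
    rcases htot (g (v (i + 1)) (w (i + 1))) (g (v (i + 1)) (w i))
        (fun h => hK (Or.inr h.symm)) with h | h
    · exact h
    · exact absurd (Or.inl h) hK
  -- the two-element instance
  set A : Set 𝒱 := {v i, v (i + 1)} with hA
  have hviA : v i ∈ A := Set.mem_insert _ _
  have hvi1A : v (i + 1) ∈ A := Set.mem_insert_iff.mpr (Or.inr rfl)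
  have hop2 : hwOp m v w A B = inducedOp (· < ·) (hwD m v w) A B := by
    unfold hwOp
    rw [if_neg ?_, if_neg ?_]
    · rintro ⟨h, -⟩
      have h1 : v i ∈ ({w m, w 1} : Set 𝒱) := by rw [← h]; exact hviA
      rcases h1 with h1 | h1
      · exact hvw i him m hmm h1
      · rw [Set.mem_singleton_iff] at h1
        exact hvw i him 1 hm1 h1
    · rintro ⟨h, -⟩
      have h1 : v i ∈ ({v m, v 1} : Set 𝒱) := by rw [← h]; exact hviA
      have h2 : v (i + 1) ∈ ({v m, v 1} : Set 𝒱) := by rw [← h]; exact hvi1A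
      have e1 : i = m ∨ i = 1 := by
        rcases h1 with h1 | h1
        · exact Or.inl (hv i him m hmm h1)
        · rw [Set.mem_singleton_iff] at h1
          exact Or.inr (hv i him 1 hm1 h1)
      have e2 : i + 1 = m ∨ i + 1 = 1 := by
        rcases h2 with h2 | h2
        · exact Or.inl (hv (i + 1) hsm m hmm h2)
        · rw [Set.mem_singleton_iff] at h2
          exact Or.inr (hv (i + 1) hsm 1 hm1 h2)
      omega
  have hmemD : ∀ x ∈ A, ∀ y ∈ B, hwD m v w x y = 1.4 ∨ hwD m v w x y = 2 := by
    rintro x hx y hy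
    rcases hx with rfl | hx
    · rcases hy with rfl | hy
      · exact Or.inl d11
      · rw [Set.mem_singleton_iff] at hy; subst hy; exact Or.inr d12
    · rw [Set.mem_singleton_iff] at hx; subst hx
      rcases hy with rfl | hy
      · exact Or.inr d21
      · rw [Set.mem_singleton_iff] at hy; subst hy; exact Or.inl d22
  have M1 : w i ∈ inducedOp lt g A B := by
    rw [heq, hop2]
    refine ⟨hwiB, v i, hviA, ?_⟩
    intro v' hv' w' hw'
    rw [d11]
    rcases hmemD v' hv' w' hw' with h | h <;> rw [h]
    · exact Or.inr rfl
    · exact Or.inl (by norm_num)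
  have M2 : w (i + 1) ∈ inducedOp lt g A B := by
    rw [heq, hop2]
    refine ⟨hwi1B, v (i + 1), hvi1A, ?_⟩
    intro v' hv' w' hw'
    rw [d22]
    rcases hmemD v' hv' w' hw' with h | h <;> rw [h]
    · exact Or.inr rfl
    · exact Or.inl (by norm_num)
  -- extract the diagonal comparisons
  have asymm : ∀ a b : C, lt a b → lt b a → False := by
    intro a b h1 h2
    exact hirr a (htrans a b a h1 h2)
  have E1 : lt (g (v i) (w i)) (g (v (i + 1)) (w (i + 1))) ∨
      g (v i) (w i) = g (v (i + 1)) (w (i + 1)) := by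
    obtain ⟨-, x, hx, hall⟩ := M1
    rcases hx with rfl | hx
    · exact hall (v (i + 1)) hvi1A (w (i + 1)) hwi1B
    · rw [Set.mem_singleton_iff] at hx
      subst hx
      have := hall (v (i + 1)) hvi1A (w (i + 1)) hwi1B
      rcases this with h | h
      · exact absurd (htrans _ _ _ h L2) (hirr _)
      · rw [h] at L2
        exact absurd L2 (hirr _)
  have E2 : lt (g (v (i + 1)) (w (i + 1))) (g (v i) (w i)) ∨
      g (v (i + 1)) (w (i + 1)) = g (v i) (w i) := by
    obtain ⟨-, x, hx, hall⟩ := M2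
    rcases hx with rfl | hx
    · have := hall (v i) hviA (w i) hwiB
      rcases this with h | h
      · exact absurd (htrans _ _ _ h L1) (hirr _)
      · rw [h] at L1
        exact absurd L1 (hirr _)
    · rw [Set.mem_singleton_iff] at hx
      subst hx
      exact hall (v i) hviA (w i) hwiB
  rcases E1 with h1 | h1
  · rcases E2 with h2 | h2
    · exact absurd h2 (fun h2 => asymm _ _ h1 h2)
    · exact h2.symm
  · exact h1
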